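/- Let R be the quotient of the ring of formal power series in noncommuting variables x₁,…,xₙ over ℤ by the two-sided ideal generated by all monomials in which some variable occurs at least twice. Then the Magnus map sending gᵢ ↦ 1 + xᵢ defines a ring element whose inverse in R is 1 - xᵢ + xᵢ² - ⋯ (which in R equals 1 - xᵢ since xᵢ² = 0), and the induced group homomorphism from the free group Fₙ to the group of units of R factors through the free Milnor group MFₙ (i.e., all elements [gᵢˣ, gᵢʸ] map to 1). -/

import Mathlib

/-- The relation imposing that every monomial with a repeated variable is zero. -/
def repeatRel (n : ℕ) (a b : FreeAlgebra ℤ (Fin n)) : Prop :=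
  b = 0 ∧ ∃ l : List (Fin n), ¬ l.Nodup ∧ a = (l.map (FreeAlgebra.ι ℤ)).prod

/-- The ring `ℤ⟨⟨x₁,…,xₙ⟩⟩` modulo the two-sided ideal generated by all monomials
in which some variable occurs at least twice. -/
def MagnusRing (n : ℕ) : Type := RingQuot (repeatRel n)

noncomputable instance (n : ℕ) : Ring (MagnusRing n) := RingQuot.instRing _

/-- The image of the variable `xᵢ` in the quotient ring. -/
noncomputable def X (n : ℕ) (i : Fin n) : MagnusRing n :=
  RingQuot.mkRingHom (repeatRel n) (FreeAlgebra.ι ℤ i)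

lemma mem_span_monomials (n : ℕ) (a : FreeAlgebra ℤ (Fin n)) :
    a ∈ Submodule.span ℤ {x : FreeAlgebra ℤ (Fin n) |
      ∃ l : List (Fin n), x = (l.map (FreeAlgebra.ι ℤ)).prod} := by
  set S : Set (FreeAlgebra ℤ (Fin n)) :=
    {x | ∃ l : List (Fin n), x = (l.map (FreeAlgebra.ι ℤ)).prod} with hS
  induction a using FreeAlgebra.induction with
  | grade0 r =>
      have h1 : (1 : FreeAlgebra ℤ (Fin n)) ∈ S := ⟨[], by simp⟩
      have : algebraMap ℤ (FreeAlgebra ℤ (Fin n)) r = r • 1 := by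
        simp [Algebra.smul_def]
      rw [this]
      exact Submodule.smul_mem _ r (Submodule.subset_span h1)
  | grade1 x => exact Submodule.subset_span ⟨[x], by simp⟩
  | mul a b ha hb =>
      induction ha using Submodule.span_induction with
      | mem m hm =>
          induction hb using Submodule.span_induction with
          | mem m' hm' =>
              obtain ⟨l, rfl⟩ := hm
              obtain ⟨l', rfl⟩ := hm'
              exact Submodule.subset_span ⟨l ++ l', by simp⟩
          | zero => simp
          | add u v _ _ hu hv => rw [mul_add]; exact Submodule.add_mem _ hu hv
          | smul z u _ hu => rw [mul_smul_comm]; exact Submodule.smul_mem _ z hu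
      | zero => simp
      | add u v _ _ hu hv => rw [add_mul]; exact Submodule.add_mem _ hu hv
      | smul z u _ hu => rw [smul_mul_assoc]; exact Submodule.smul_mem _ z hu
  | add a b ha hb => exact Submodule.add_mem _ ha hb

lemma key_free (n : ℕ) (i : Fin n) (a : FreeAlgebra ℤ (Fin n)) :
    RingQuot.mkRingHom (repeatRel n) (FreeAlgebra.ι ℤ i * a * FreeAlgebra.ι ℤ i) = 0 := by
  induction mem_span_monomials n a using Submodule.span_induction with
  | mem m hm =>
      obtain ⟨l, rfl⟩ := hm
      have hrel : repeatRel n (((i :: (l ++ [i])).map (FreeAlgebra.ι ℤ)).prod) 0 := by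
        refine ⟨rfl, i :: (l ++ [i]), ?_, rfl⟩
        simp [List.nodup_cons]
      have heq : FreeAlgebra.ι ℤ i * (l.map (FreeAlgebra.ι ℤ)).prod * FreeAlgebra.ι ℤ i
          = ((i :: (l ++ [i])).map (FreeAlgebra.ι ℤ)).prod := by
        simp [List.prod_append, mul_assoc]
      rw [heq, RingQuot.mkRingHom_rel hrel, map_zero]
  | zero => simp
  | add u v _ _ hu hv => rw [mul_add, add_mul, map_add, hu, hv, add_zero]
  | smul z u _ hu =>
      rw [mul_smul_comm, smul_mul_assoc, map_zsmul, hu]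
      exact smul_zero z

lemma key (n : ℕ) (i : Fin n) (c : MagnusRing n) : X n i * c * X n i = 0 := by
  obtain ⟨a, rfl⟩ := RingQuot.mkRingHom_surjective _ c
  show (RingQuot.mkRingHom (repeatRel n)) _ * _ * _ = 0
  rw [X, ← map_mul, ← map_mul, key_free]

lemma Xsq (n : ℕ) (i : Fin n) : X n i * X n i = 0 := by
  have := key n i 1; rwa [mul_one] at this

/-- In the Magnus ring, `1 + xᵢ` is a unit with inverse `1 - xᵢ`, and any
group homomorphism `M` from the free group to the units of the Magnus ring with
`M(gᵢ) = 1 + xᵢ` (the Magnus expansion) kills every commutator of two conjugates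
of the same generator, hence factors through the free Milnor group. -/
theorem magnus_factors_through_milnor (n : ℕ) :
    (∀ i : Fin n, (1 + X n i) * (1 - X n i) = 1 ∧ (1 - X n i) * (1 + X n i) = 1) ∧
    ∀ (M : FreeGroup (Fin n) →* (MagnusRing n)ˣ),
      (∀ i : Fin n, (M (FreeGroup.of i) : MagnusRing n) = 1 + X n i) →
      ∀ (i : Fin n) (x y : FreeGroup (Fin n)),
        M ((x⁻¹ * FreeGroup.of i * x)⁻¹ * (y⁻¹ * FreeGroup.of i * y)⁻¹ *
           (x⁻¹ * FreeGroup.of i * x) * (y⁻¹ * FreeGroup.of i * y)) = 1 := by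
  constructor
  · intro i
    constructor
    · have h := Xsq n i
      rw [mul_sub, add_mul, add_mul, one_mul, mul_one, one_mul, h]
      abel
    · have h := Xsq n i
      rw [sub_mul, mul_add, mul_add, one_mul, mul_one, one_mul, h]
      abel
  · intro M hM i x y
    set a : MagnusRing n := ↑(M x) with ha
    set a' : MagnusRing n := ↑(M x)⁻¹ with ha'
    set b : MagnusRing n := ↑(M y) with hb
    set b' : MagnusRing n := ↑(M y)⁻¹ with hb'
    have haa : a' * a = 1 := (M x).inv_mul
    have hbb : b' * b = 1 := (M y).inv_mul
    have hA : (↑(M (x⁻¹ * FreeGroup.of i * x)) : MagnusRing n)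
        = 1 + a' * X n i * a := by
      rw [map_mul, map_mul, map_inv, Units.val_mul, Units.val_mul, hM]
      rw [mul_add, mul_one, add_mul, haa, ← ha', ← ha, mul_assoc]
    have hB : (↑(M (y⁻¹ * FreeGroup.of i * y)) : MagnusRing n)
        = 1 + b' * X n i * b := by
      rw [map_mul, map_mul, map_inv, Units.val_mul, Units.val_mul, hM]
      rw [mul_add, mul_one, add_mul, hbb, ← hb', ← hb, mul_assoc]
    have hpq : (a' * X n i * a) * (b' * X n i * b) = 0 := by
      have h := key n i (a * b')
      calc (a' * X n i * a) * (b' * X n i * b)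
          = a' * (X n i * (a * b') * X n i) * b := by simp [mul_assoc]
        _ = 0 := by rw [h, mul_zero, zero_mul]
    have hqp : (b' * X n i * b) * (a' * X n i * a) = 0 := by
      have h := key n i (b * a')
      calc (b' * X n i * b) * (a' * X n i * a)
          = b' * (X n i * (b * a') * X n i) * a := by simp [mul_assoc]
        _ = 0 := by rw [h, mul_zero, zero_mul]
    have hcomm : M (x⁻¹ * FreeGroup.of i * x) * M (y⁻¹ * FreeGroup.of i * y)
        = M (y⁻¹ * FreeGroup.of i * y) * M (x⁻¹ * FreeGroup.of i * x) := by
      have expand : ∀ p q : MagnusRing n, (1 + p) * (1 + q) = 1 + p + q + p * q := by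
        intro p q
        rw [mul_add, mul_one, add_mul, one_mul]
        abel
      apply Units.ext
      rw [Units.val_mul, Units.val_mul, hA, hB, expand, expand, hpq, hqp,
        add_zero, add_zero]
      abel
    rw [map_mul, map_mul, map_mul, map_inv, map_inv, mul_assoc, hcomm,
      ← mul_assoc, mul_assoc _ _ (M (y⁻¹ * FreeGroup.of i * y)),
      inv_mul_cancel, mul_one, inv_mul_cancel]
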